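/- Let S = k[x₁,…,xₙ] and let M be a squarefree S-module. If β_{i,a}^S(M) := dim_k [Torᵢ^S(k, M)]_a is nonzero for some a ∈ Zⁿ, then a is a squarefree vector, i.e., every coordinate of a is 0 or 1. -/

import Mathlib

open MvPolynomial Finset
open scoped Classical
set_option linter.unusedSectionVars false
set_option maxHeartbeats 1000000
set_option synthInstance.maxHeartbeats 400000

noncomputable section

def chi {ι : Type} [DecidableEq ι] (F : Finset ι) : ι → ℕ := fun j => if j ∈ F then 1 else 0
def mon (k : Type) [Field k] {ι : Type} [Fintype ι] (b : ι → ℕ) : MvPolynomial ι k :=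
  ∏ j, (X j : MvPolynomial ι k) ^ (b j)

structure GradedMod (k : Type) [Field k] (ι : Type) [Fintype ι] [DecidableEq ι] where
  carrier : Type
  [acg : AddCommGroup carrier]
  [modS : Module (MvPolynomial ι k) carrier]
  [modk : Module k carrier]
  [tower : IsScalarTower k (MvPolynomial ι k) carrier]
  deg : (ι → ℕ) → Submodule k carrier
  internal : DirectSum.IsInternal deg
  mul_mem : ∀ (j : ι) (a : ι → ℕ) (x : carrier), x ∈ deg a →
      (X j : MvPolynomial ι k) • x ∈ deg (a + Pi.single j 1)
  finite : Module.Finite (MvPolynomial ι k) carrier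

attribute [instance] GradedMod.acg GradedMod.modS GradedMod.modk GradedMod.tower

namespace GradedMod

variable {k : Type} [Field k] {ι : Type} [Fintype ι] [DecidableEq ι]

lemma mon_zero : mon k (0 : ι → ℕ) = 1 := by simp [mon]

lemma mon_add (a b : ι → ℕ) : mon k (a + b) = mon k a * mon k b := by
  simp [mon, pow_add, Finset.prod_mul_distrib]

lemma mon_single (j : ι) : mon k (Pi.single j 1 : ι → ℕ) = X j := by
  rw [mon, Finset.prod_eq_single j]
  · simp
  · intro b _ hb; rw [Pi.single_eq_of_ne hb]; simp
  · intro h; exact absurd (Finset.mem_univ j) h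

lemma smul_comm_k (M : GradedMod k ι) (p : MvPolynomial ι k) (c : k) (x : M.carrier) :
    p • (c • x) = c • (p • x) := by
  rw [← IsScalarTower.algebraMap_smul (MvPolynomial ι k) c x, smul_smul, mul_comm,
    ← smul_smul, IsScalarTower.algebraMap_smul]

lemma mon_smul_mem (M : GradedMod k ι) :
    ∀ (n : ℕ) (b a : ι → ℕ), ∑ j, b j = n → ∀ x ∈ M.deg a, mon k b • x ∈ M.deg (a + b) := by
  intro n
  induction n with
  | zero =>
    intro b a hb x hx
    have hb0 : b = 0 := by
      funext j
      have := (Finset.sum_eq_zero_iff).1 hb j (Finset.mem_univ j)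
      simpa using this
    subst hb0
    simpa [mon_zero] using hx
  | succ m ih =>
    intro b a hb x hx
    obtain ⟨j, hj⟩ : ∃ j, b j ≠ 0 := by
      by_contra hc
      push_neg at hc
      rw [Finset.sum_eq_zero fun j _ => hc j] at hb
      exact Nat.succ_ne_zero m hb.symm
    set b' := Function.update b j (b j - 1) with hb'
    have hbb : b = b' + Pi.single j 1 := by
      funext i
      by_cases hij : i = j
      · subst hij
        simp only [Pi.add_apply, hb', Function.update_self, Pi.single_eq_same]
        omega
      · simp [hb', Function.update_of_ne hij, Pi.single_eq_of_ne hij]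
    have hsum : ∑ i, b' i = m := by
      have h1 : ∑ i, b i = (∑ i, b' i) + ∑ i, (Pi.single j 1 : ι → ℕ) i := by
        rw [← Finset.sum_add_distrib]; rw [hbb]; rfl
      have h2 : ∑ i, (Pi.single j 1 : ι → ℕ) i = 1 := by
        simp [Finset.sum_pi_single']
      omega
    have h1 := ih b' a hsum x hx
    have h2 := M.mul_mem j (a + b') _ h1
    have h3 : mon k b • x = (X j : MvPolynomial ι k) • (mon k b' • x) := by
      rw [hbb, mon_add, mon_single, smul_smul, mul_comm]
    rw [h3, hbb, ← add_assoc]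
    exact h2

end GradedMod

namespace GradedMod
variable {k : Type} [Field k] {ι : Type} [Fintype ι] [DecidableEq ι]

/-- Yanagawa's squarefreeness condition: multiplication by `x^b` is a bijection
`M_a → M_{a+b}` whenever `supp b ⊆ supp a`. -/
def IsSquarefree (M : GradedMod k ι) : Prop :=
  ∀ a b : ι → ℕ, (∀ j, b j ≠ 0 → a j ≠ 0) →
    Set.BijOn (fun x : M.carrier => mon k b • x) (M.deg a) (M.deg (a + b))

lemma chi_insert {ℓ : ι} {F : Finset ι} (h : ℓ ∉ F) :
    chi (insert ℓ F) = chi F + Pi.single ℓ 1 := by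
  funext j
  by_cases hj : j = ℓ
  · subst hj; simp [chi, h, Pi.single_eq_same]
  · simp [chi, hj, Pi.single_eq_of_ne hj]

lemma chi_sdiff {F G : Finset ι} (h : F ⊆ G) : chi F + chi (G \ F) = chi G := by
  funext j
  by_cases hF : j ∈ F
  · simp [chi, hF, h hF, Finset.mem_sdiff]
  · by_cases hG : j ∈ G <;> simp [chi, hF, hG, Finset.mem_sdiff]

/-- Multiplication by the variable `x_ℓ` as a `k`-linear map on squarefree graded pieces. -/
def multMap (M : GradedMod k ι) (ℓ : ι) (F : Finset ι) (h : ℓ ∉ F) :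
    M.deg (chi F) →ₗ[k] M.deg (chi (insert ℓ F)) where
  toFun x := ⟨(X ℓ : MvPolynomial ι k) • (x : M.carrier), by
    have h1 := M.mul_mem ℓ (chi F) x.1 x.2
    rw [chi_insert h]; exact h1⟩
  map_add' x y := by ext; simp [smul_add]
  map_smul' c x := by
    ext
    have h1 : ((c • x : M.deg (chi F)) : M.carrier) = c • (x : M.carrier) := rfl
    simp only [RingHom.id_apply, SetLike.val_smul, h1]
    exact M.smul_comm_k _ c _

end GradedMod

/-- A "combinatorial squarefree module": a family of `k`-vector spaces indexed by the
squarefree degrees `F ⊆ ι` together with the multiplication maps `x^{G∖F} : M_F → M_G`. -/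
structure CombSqMod (k : Type) [Field k] (ι : Type) [Fintype ι] [DecidableEq ι] where
  piece : Finset ι → Type
  [acg : ∀ F, AddCommGroup (piece F)]
  [modk : ∀ F, Module k (piece F)]
  mult : ∀ (F G : Finset ι), F ⊆ G → (piece F →ₗ[k] piece G)

attribute [instance] CombSqMod.acg CombSqMod.modk

namespace CombSqMod

variable {k : Type} [Field k] {ι : Type} [Fintype ι] [DecidableEq ι]

/-- Index set of the degree-`F` strand of the Koszul complex on the variables in `W`. -/
abbrev kIdx (W F : Finset ι) (j : ℕ) : Type := {E : Finset ι // E ⊆ W ∧ E ⊆ F ∧ E.card = j}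

/-- Terms of the degree-`F` strand of the Koszul complex of `N` over `k[xⱼ : j ∈ W]`. -/
abbrev kSpace (N : CombSqMod k ι) (W F : Finset ι) (j : ℕ) : Type :=
  ∀ E : kIdx W F j, N.piece (F \ E.1)

/-- Koszul sign (with respect to a fixed enumeration of the variables). -/
def ksign (E : Finset ι) (ℓ : ι) : ℤ :=
  (-1 : ℤ) ^ (E.filter fun j => Fintype.equivFin ι j < Fintype.equivFin ι ℓ).card

/-- The Koszul differential (degree-`F` strand, variables in `W`). -/
def kd (N : CombSqMod k ι) (W F : Finset ι) (j : ℕ) :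
    kSpace N W F (j + 1) →ₗ[k] kSpace N W F j :=
  LinearMap.pi fun E' =>
    ∑ ℓ ∈ ((F ∩ W) \ E'.1).attach,
      ksign E'.1 ℓ.1 •
        ((N.mult (F \ insert ℓ.1 E'.1) (F \ E'.1)
            (Finset.sdiff_subset_sdiff (Finset.Subset.refl F) (Finset.subset_insert ℓ.1 E'.1))).comp
          (LinearMap.proj (⟨insert ℓ.1 E'.1, by
              have h := ℓ.2
              simp only [Finset.mem_sdiff, Finset.mem_inter] at h
              exact ⟨Finset.insert_subset h.1.2 E'.2.1, Finset.insert_subset h.1.1 E'.2.2.1,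
                by rw [Finset.card_insert_of_notMem h.2, E'.2.2.2]⟩⟩ : kIdx W F (j + 1))))

/-- Cycles of the Koszul complex. -/
def kcycles (N : CombSqMod k ι) (W F : Finset ι) : (i : ℕ) → Submodule k (kSpace N W F i)
  | 0 => ⊤
  | (j + 1) => LinearMap.ker (kd N W F j)

/-- The graded Betti number `β_{i,F}` of `N` over `k[xⱼ : j ∈ W]`, defined (as usual, for
squarefree degrees) as the `k`-dimension of the degree-`F` part of the `i`-th Koszul homology,
i.e. of `[Tor_i(k, N)]_F`. -/
def bettiNum (N : CombSqMod k ι) (W : Finset ι) (i : ℕ) (F : Finset ι) : ℕ :=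
  Module.finrank k
    (↥(kcycles N W F i) ⧸
      (Submodule.comap (kcycles N W F i).subtype (LinearMap.range (kd N W F i))))

/-- The (Krull) dimension of the restriction `N|_W`: for squarefree modules this is the
maximal cardinality of a face `F ⊆ W` with nonvanishing piece. -/
def combDim (N : CombSqMod k ι) (W : Finset ι) : ℕ :=
  Finset.sup (W.powerset.filter fun F => Nontrivial (N.piece F)) Finset.card

/-- `N|_W` is a Cohen–Macaulay module of dimension `d` over `k[xⱼ : j ∈ W]`
(via the Auslander–Buchsbaum characterization: `β_{i,F} = 0` for `i > #W − d`). -/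
def IsCMon (N : CombSqMod k ι) (W : Finset ι) (d : ℕ) : Prop :=
  combDim N W = d ∧
    ∀ (i : ℕ) (F : Finset ι), F ⊆ W → (W.card : ℤ) - d < i → bettiNum N W i F = 0

/-- The restriction `N|_W` is the zero module. -/
def IsZeroOn (N : CombSqMod k ι) (W : Finset ι) : Prop :=
  ∀ F : Finset ι, F ⊆ W → Subsingleton (N.piece F)

/-- `N` is `l`-Cohen–Macaulay: for every `W` with `#W < l`, the restriction of `N` away
from `W` is zero or Cohen–Macaulay of the same dimension as `N`. -/
def lCM (N : CombSqMod k ι) (l : ℕ) : Prop :=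
  ∀ W : Finset ι, W.card < l →
    IsZeroOn N Wᶜ ∨ IsCMon N Wᶜ (combDim N Finset.univ)

/-- `N` is generated by its degree-`0` part. -/
def GenByDeg0 (N : CombSqMod k ι) : Prop :=
  ∀ G : Finset ι, Function.Surjective (N.mult ∅ G (Finset.empty_subset G))

end CombSqMod

namespace GradedMod

variable {k : Type} [Field k] {ι : Type} [Fintype ι] [DecidableEq ι]

/-- The combinatorial squarefree module underlying a graded module: pieces are the
squarefree graded components `M_F := M_{χ_F}` and the maps are multiplication by
`x^{G ∖ F}`. -/
def toComb (M : GradedMod k ι) : CombSqMod k ι where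
  piece F := M.deg (chi F)
  mult F G hFG :=
    { toFun := fun x => ⟨mon k (chi (G \ F)) • x.1, by
        have h1 := M.mon_smul_mem (∑ j, chi (G \ F) j) (chi (G \ F)) (chi F) rfl x.1 x.2
        rwa [chi_sdiff hFG] at h1⟩
      map_add' := fun x y => by ext; simp [smul_add]
      map_smul' := fun c x => by
        ext
        have h1 : ((c • x : M.deg (chi F)) : M.carrier) = c • (x : M.carrier) := rfl
        simp only [RingHom.id_apply, SetLike.val_smul, h1]
        exact M.smul_comm_k _ c _ }



/-- The graded Betti numbers `β_{i,F}^S(M)` of `M` over `S = k[xⱼ : j ∈ ι]`. -/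
def betti (M : GradedMod k ι) (i : ℕ) (F : Finset ι) : ℕ :=
  CombSqMod.bettiNum M.toComb Finset.univ i F

/-- The Krull dimension of `M` (for squarefree modules: the largest size of a face with
nonzero component). -/
def dim (M : GradedMod k ι) : ℕ := CombSqMod.combDim M.toComb Finset.univ

/-- `M` is a Cohen–Macaulay module of dimension `d`. -/
def IsCMdim (M : GradedMod k ι) (d : ℕ) : Prop := CombSqMod.IsCMon M.toComb Finset.univ d

/-- `M` is `l`-Cohen–Macaulay. -/
def lCM (M : GradedMod k ι) (l : ℕ) : Prop := CombSqMod.lCM M.toComb l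

end GradedMod

namespace GradedMod

variable {k : Type} [Field k] {ι : Type} [Fintype ι] [DecidableEq ι]

/-- The degree-`a` component of `M` for an arbitrary integer vector `a ∈ ℤ^ι`
(zero outside `ℕ^ι`). -/
def degZ (M : GradedMod k ι) (a : ι → ℤ) : Submodule k M.carrier :=
  if (∀ j, 0 ≤ a j) then M.deg (fun j => (a j).toNat) else ⊥

/-- The `ℤ`-valued indicator vector of `E`. -/
def chiZ (E : Finset ι) : ι → ℤ := fun j => if j ∈ E then 1 else 0

lemma degZ_pos (M : GradedMod k ι) {a : ι → ℤ} (h : ∀ j, 0 ≤ a j) :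
    degZ M a = M.deg (fun j => (a j).toNat) := by
  unfold degZ
  exact if_pos h

lemma degZ_neg (M : GradedMod k ι) {a : ι → ℤ} (h : ¬ ∀ j, 0 ≤ a j) : degZ M a = ⊥ := by
  unfold degZ
  exact if_neg h

/-- Multiplication by `x_ℓ` between integer-degree components. -/
def multZto (M : GradedMod k ι) (ℓ : ι) (b c : ι → ℤ) (h : c = b + Pi.single ℓ 1) :
    ↥(degZ M b) →ₗ[k] ↥(degZ M c) where
  toFun x := ⟨(X ℓ : MvPolynomial ι k) • (x : M.carrier), by
    by_cases hb : ∀ j, 0 ≤ b j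
    · have hx : (x : M.carrier) ∈ M.deg (fun j => (b j).toNat) :=
        (degZ_pos M hb).le x.2
      have h2 := M.mul_mem ℓ _ _ hx
      have hc : ∀ j, 0 ≤ c j := by
        intro j
        rcases eq_or_ne j ℓ with hj | hj
        · subst hj
          have hb2 := hb j
          simp only [h, Pi.add_apply, Pi.single_eq_same]
          omega
        · simpa [h, Pi.single_eq_of_ne hj] using hb j
      refine (degZ_pos M hc).ge ?_
      convert h2 using 2
      funext j
      rcases eq_or_ne j ℓ with hj | hj
      · subst hj
        have hb2 := hb j
        simp only [h, Pi.add_apply, Pi.single_eq_same]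
        omega
      · simp [h, Pi.single_eq_of_ne hj]
    · have hx0 : (x : M.carrier) = 0 := by
        have h2 := x.2
        simpa [degZ_neg M hb] using h2
      rw [hx0, smul_zero]
      exact zero_mem _⟩
  map_add' x y := by ext; simp [smul_add]
  map_smul' c' x := by
    ext
    have h1 : ((c' • x : ↥(degZ M b)) : M.carrier) = c' • (x : M.carrier) := rfl
    simp only [RingHom.id_apply, SetLike.val_smul, h1]
    exact M.smul_comm_k _ c' _

abbrev zIdx (ι : Type) [Fintype ι] [DecidableEq ι] (i : ℕ) : Type := {E : Finset ι // E.card = i}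

/-- The degree-`a` strand (`a ∈ ℤ^ι`) of the Koszul complex of `M`. -/
abbrev zSpace (M : GradedMod k ι) (a : ι → ℤ) (i : ℕ) : Type :=
  ∀ E : zIdx ι i, ↥(degZ M (a - chiZ E.1))

instance (M : GradedMod k ι) (a : ι → ℤ) (i : ℕ) : AddCommGroup (zSpace M a i) :=
  Pi.addCommGroup

instance (M : GradedMod k ι) (a : ι → ℤ) (i : ℕ) : Module k (zSpace M a i) :=
  Pi.module _ _ _

/-- The Koszul differential of the degree-`a` strand. -/
def zd (M : GradedMod k ι) (a : ι → ℤ) (j : ℕ) :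
    zSpace M a (j + 1) →ₗ[k] zSpace M a j :=
  LinearMap.pi fun E' =>
    ∑ ℓ ∈ ((E'.1)ᶜ).attach,
      CombSqMod.ksign E'.1 ℓ.1 •
        ((multZto M ℓ.1 (a - chiZ (insert ℓ.1 E'.1)) (a - chiZ E'.1) (by
            have hℓ : ℓ.1 ∉ E'.1 := Finset.mem_compl.1 ℓ.2
            funext j'
            simp only [Pi.add_apply, Pi.sub_apply, chiZ]
            by_cases hj : j' = ℓ.1
            · subst hj
              simp [hℓ, Pi.single_eq_same]
            · simp [Pi.single_eq_of_ne hj, hj]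
            )).comp
          (LinearMap.proj
            (⟨insert ℓ.1 E'.1, by
                rw [Finset.card_insert_of_notMem (Finset.mem_compl.1 ℓ.2), E'.2]⟩ :
              zIdx ι (j + 1))))

/-- Cycles. -/
def zcycles (M : GradedMod k ι) (a : ι → ℤ) : (i : ℕ) → Submodule k (zSpace M a i)
  | 0 => ⊤
  | (j + 1) => LinearMap.ker (zd M a j)

/-- The graded Betti number `β_{i,a}(M) = dim_k [Tor_i^S(k, M)]_a` for `a ∈ ℤ^ι`,
computed as Koszul homology. -/
def bettiZ (M : GradedMod k ι) (i : ℕ) (a : ι → ℤ) : ℕ :=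
  Module.finrank k
    (↥(zcycles M a i) ⧸
      (Submodule.comap (zcycles M a i).subtype (LinearMap.range (zd M a i))))

end GradedMod

namespace GradedMod

variable {k : Type} [Field k] {ι : Type} [Fintype ι] [DecidableEq ι]

lemma bettiZ_eq_zero_of_subsingleton (M : GradedMod k ι) (i : ℕ) (a : ι → ℤ)
    (h : Subsingleton (zSpace M a i)) : M.bettiZ i a = 0 := by
  haveI := h
  haveI : Subsingleton ↥(zcycles M a i) := ⟨fun x y => Subtype.ext (Subsingleton.elim _ _)⟩
  haveI : Subsingleton
      (↥(zcycles M a i) ⧸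
        (Submodule.comap (zcycles M a i).subtype (LinearMap.range (zd M a i)))) :=
    (Submodule.Quotient.mk_surjective _).subsingleton
  exact Module.finrank_zero_of_subsingleton

lemma bettiZ_eq_zero_of_neg (M : GradedMod k ι) (i : ℕ) (a : ι → ℤ) (j : ι)
    (hj : a j < 0) : M.bettiZ i a = 0 := by
  apply bettiZ_eq_zero_of_subsingleton
  haveI : ∀ E : zIdx ι i, Subsingleton ↥(degZ M (a - chiZ E.1)) := by
    intro E
    have hb : degZ M (a - chiZ E.1) = ⊥ := by
      apply degZ_neg
      intro hall
      have := hall j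
      simp only [Pi.sub_apply, chiZ] at this
      split at this <;> omega
    rw [hb]
    exact ⟨fun x y => Subtype.ext (by
      have hx := x.2; have hy := y.2
      simp only [Submodule.mem_bot] at hx hy
      rw [hx, hy])⟩
  infer_instance


open CombSqMod Finset in
lemma ksign_insert (A : Finset ι) (m ℓ : ι) (hm : m ∉ A) :
    ksign (insert m A) ℓ =
      (if Fintype.equivFin ι m < Fintype.equivFin ι ℓ then -1 else 1) * ksign A ℓ := by
  unfold ksign
  rw [Finset.filter_insert]
  split
  · rw [Finset.card_insert_of_notMem (fun hc => hm (Finset.mem_of_mem_filter m hc)),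
      pow_succ, mul_comm]
  · rw [one_mul]

open CombSqMod in
lemma ksign_sq (E : Finset ι) (ℓ : ι) : ksign E ℓ * ksign E ℓ = 1 := by
  unfold ksign
  rw [← pow_add, ← two_mul, pow_mul, neg_one_sq, one_pow]

open CombSqMod in
lemma ksign_cross {A : Finset ι} {j ℓ : ι} (hj : j ∉ A) (hℓ : ℓ ∉ A) (hne : ℓ ≠ j) :
    ksign (insert j A) ℓ * ksign (insert ℓ A) j = -(ksign A j * ksign A ℓ) := by
  rw [ksign_insert A j ℓ hj, ksign_insert A ℓ j hℓ]
  have hpp : Fintype.equivFin ι ℓ ≠ Fintype.equivFin ι j := fun hc => hne ((Fintype.equivFin ι).injective hc)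
  rcases lt_or_gt_of_ne hpp with hlt | hlt
  · rw [if_neg (by omega), if_pos hlt]; ring
  · rw [if_pos hlt, if_neg (by omega)]; ring

lemma chiZ_erase {E : Finset ι} {j : ι} (h : j ∈ E) (a : ι → ℤ) :
    a - chiZ (E.erase j) = (a - chiZ E) + Pi.single j 1 := by
  funext j'
  simp only [Pi.sub_apply, Pi.add_apply, chiZ]
  by_cases hj : j' = j
  · subst hj; simp [h, Pi.single_eq_same, Finset.mem_erase]
  · simp [Pi.single_eq_of_ne hj, Finset.mem_erase, hj]

/-- Multiplication by `x_j` from degree `a - χ_E` to degree `a - χ_{E∖j}`. -/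
def jmult (M : GradedMod k ι) (a : ι → ℤ) {j : ι} {E : Finset ι} (h : j ∈ E) :
    ↥(degZ M (a - chiZ E)) →ₗ[k] ↥(degZ M (a - chiZ (E.erase j))) :=
  multZto M j _ _ (chiZ_erase h a)

lemma jmult_val (M : GradedMod k ι) (a : ι → ℤ) {j : ι} {E : Finset ι} (h : j ∈ E)
    (x : ↥(degZ M (a - chiZ E))) :
    ((jmult M a h x : M.carrier)) = (X j : MvPolynomial ι k) • (x : M.carrier) := rfl

lemma jmult_bij (M : GradedMod k ι) (hsf : M.IsSquarefree) (a : ι → ℤ) {j : ι}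
    (h2 : 2 ≤ a j) {E : Finset ι} (h : j ∈ E) :
    Function.Bijective (jmult (k := k) M a (E := E) (j := j) h) := by
  by_cases hpos : ∀ j', 0 ≤ (a - chiZ E) j'
  · -- positive case: use squarefreeness
    set b : ι → ℕ := fun j' => ((a - chiZ E) j').toNat with hb
    have hsrc : degZ M (a - chiZ E) = M.deg b := degZ_pos M hpos
    have hposT : ∀ j', 0 ≤ (a - chiZ (E.erase j)) j' := by
      intro j'
      rw [chiZ_erase h a]
      have := hpos j'
      by_cases hj : j' = j
      · subst hj; simp only [Pi.add_apply, Pi.single_eq_same]; omega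
      · simpa [Pi.single_eq_of_ne hj] using this
    have hbj : (a - chiZ E) j = a j - 1 := by simp [chiZ, h]
    have htgt : degZ M (a - chiZ (E.erase j)) = M.deg (b + Pi.single j 1) := by
      rw [degZ_pos M hposT]
      congr 1
      funext j'
      rw [chiZ_erase h a]
      by_cases hj : j' = j
      · subst hj
        simp only [Pi.add_apply, Pi.single_eq_same, hb]
        have := hpos j'
        omega
      · simp [Pi.single_eq_of_ne hj, hb]
    have hsupp : ∀ j', (Pi.single j 1 : ι → ℕ) j' ≠ 0 → b j' ≠ 0 := by
      intro j' hj'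
      by_cases hj : j' = j
      · subst hj
        simp only [hb, hbj]
        omega
      · rw [Pi.single_eq_of_ne hj] at hj'
        exact absurd rfl hj'
    have hbij := hsf b (Pi.single j 1) hsupp
    rw [mon_single] at hbij
    constructor
    · rintro ⟨xv, hxv⟩ ⟨yv, hyv⟩ hxy
      rw [hsrc] at hxv hyv
      have hval : (X j : MvPolynomial ι k) • xv = (X j : MvPolynomial ι k) • yv :=
        Subtype.ext_iff.1 hxy
      exact Subtype.ext (hbij.2.1 hxv hyv hval)
    · rintro ⟨zv, hzv⟩
      rw [htgt] at hzv
      obtain ⟨x, hx, hxz⟩ := hbij.2.2 hzv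
      refine ⟨⟨x, hsrc ▸ hx⟩, ?_⟩
      exact Subtype.ext hxz
  · -- both pieces are zero
    have hnegT : ¬ ∀ j', 0 ≤ (a - chiZ (E.erase j)) j' := by
      intro hc
      apply hpos
      intro j'
      have := hc j'
      rw [chiZ_erase h a] at this
      by_cases hj : j' = j
      · subst hj
        simp only [Pi.sub_apply, chiZ, h, if_pos]
        omega
      · simpa [Pi.single_eq_of_ne hj] using this
    have h1 : degZ M (a - chiZ E) = ⊥ := degZ_neg M hpos
    have h2' : degZ M (a - chiZ (E.erase j)) = ⊥ := degZ_neg M hnegT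
    constructor
    · rintro ⟨xv, hxv⟩ ⟨yv, hyv⟩ _
      apply Subtype.ext
      rw [h1, Submodule.mem_bot] at hxv hyv
      show xv = yv
      rw [hxv, hyv]
    · rintro ⟨zv, hzv⟩
      refine ⟨0, Subtype.ext ?_⟩
      rw [h2', Submodule.mem_bot] at hzv
      show _ = zv
      rw [hzv]
      have : ((jmult (k := k) M a (E := E) (j := j) h 0 : M.carrier)) = (X j : MvPolynomial ι k) • ((0 : ↥(degZ M (a - chiZ E))) : M.carrier) := rfl
      rw [this]
      simp

/-- Inverse of multiplication by `x_j` (squarefree case, `a j ≥ 2`). -/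
def jinv (M : GradedMod k ι) (hsf : M.IsSquarefree) (a : ι → ℤ) {j : ι} (h2 : 2 ≤ a j)
    {E : Finset ι} (h : j ∈ E) :
    ↥(degZ M (a - chiZ (E.erase j))) →ₗ[k] ↥(degZ M (a - chiZ E)) :=
  (LinearEquiv.ofBijective (jmult M a h) (jmult_bij M hsf a h2 h)).symm.toLinearMap

lemma jinv_val (M : GradedMod k ι) (hsf : M.IsSquarefree) (a : ι → ℤ) {j : ι} (h2 : 2 ≤ a j)
    {E : Finset ι} (h : j ∈ E) (z : ↥(degZ M (a - chiZ (E.erase j)))) :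
    (X j : MvPolynomial ι k) • ((jinv M hsf a h2 h z : M.carrier)) = (z : M.carrier) :=
  congrArg Subtype.val
    ((LinearEquiv.ofBijective (jmult M a h) (jmult_bij M hsf a h2 h)).apply_symm_apply z)

lemma jinv_eq (M : GradedMod k ι) (hsf : M.IsSquarefree) (a : ι → ℤ) {j : ι} (h2 : 2 ≤ a j)
    {E : Finset ι} (h : j ∈ E) (z : ↥(degZ M (a - chiZ (E.erase j))))
    (u : ↥(degZ M (a - chiZ E))) (hu : (X j : MvPolynomial ι k) • (u : M.carrier) = (z : M.carrier)) :
    jinv M hsf a h2 h z = u := by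
  apply (jmult_bij M hsf a h2 h).1
  have h3 : jmult M a h (jinv M hsf a h2 h z) = z :=
    (LinearEquiv.ofBijective (jmult M a h) (jmult_bij M hsf a h2 h)).apply_symm_apply z
  rw [h3]
  exact Subtype.ext hu.symm

/-- The contracting homotopy. -/
def hmt (M : GradedMod k ι) (hsf : M.IsSquarefree) (a : ι → ℤ) {j : ι} (h2 : 2 ≤ a j)
    (i : ℕ) (y : zSpace M a i) : zSpace M a (i + 1) :=
  fun E => if h : j ∈ E.1 then
    CombSqMod.ksign (E.1.erase j) j •
      jinv M hsf a h2 h (y ⟨E.1.erase j, by rw [Finset.card_erase_of_mem h, E.2]; rfl⟩)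
  else 0

lemma hmt_val_pos (M : GradedMod k ι) (hsf : M.IsSquarefree) (a : ι → ℤ) {j : ι} (h2 : 2 ≤ a j)
    (i : ℕ) (y : zSpace M a i) (E' : zIdx ι (i + 1)) (h : j ∈ E'.1) :
    (hmt M hsf a h2 i y E' : M.carrier) =
      CombSqMod.ksign (E'.1.erase j) j •
        (jinv M hsf a h2 h (y ⟨E'.1.erase j, by rw [Finset.card_erase_of_mem h, E'.2]; rfl⟩) : M.carrier) := by
  simp only [hmt, dif_pos h]
  rfl

lemma hmt_val_neg (M : GradedMod k ι) (hsf : M.IsSquarefree) (a : ι → ℤ) {j : ι} (h2 : 2 ≤ a j)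
    (i : ℕ) (y : zSpace M a i) (E' : zIdx ι (i + 1)) (h : j ∉ E'.1) :
    (hmt M hsf a h2 i y E' : M.carrier) = 0 := by
  simp only [hmt, dif_neg h]
  rfl

lemma hmt_zero (M : GradedMod k ι) (hsf : M.IsSquarefree) (a : ι → ℤ) {j : ι} (h2 : 2 ≤ a j)
    (i : ℕ) : hmt M hsf a h2 i 0 = 0 := by
  funext E
  simp only [hmt]
  split
  · show _ • jinv M hsf a h2 _ (0 : ↥(degZ M _)) = _
    rw [map_zero, smul_zero]
    rfl
  · rfl

def zdTerm (M : GradedMod k ι) (a : ι → ℤ) (i : ℕ) (y : zSpace M a (i + 1))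
    (E : zIdx ι i) (ℓ : ι) : M.carrier :=
  if h : ℓ ∈ E.1ᶜ then
    CombSqMod.ksign E.1 ℓ •
      ((X ℓ : MvPolynomial ι k) •
        (y ⟨insert ℓ E.1, by
            rw [Finset.card_insert_of_notMem (Finset.mem_compl.1 h), E.2]⟩ : M.carrier))
  else 0

lemma zd_apply_val (M : GradedMod k ι) (a : ι → ℤ) (i : ℕ) (y : zSpace M a (i + 1))
    (E : zIdx ι i) :
    ((zd M a i y E : M.carrier)) = ∑ ℓ ∈ (E.1ᶜ).attach, zdTerm M a i y E ℓ.1 := by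
  unfold zd
  rw [LinearMap.pi_apply, LinearMap.sum_apply, AddSubmonoidClass.coe_finset_sum]
  refine Finset.sum_congr rfl fun ℓ _ => ?_
  rw [zdTerm, dif_pos ℓ.2]
  rfl

lemma zd_apply_val' (M : GradedMod k ι) (a : ι → ℤ) (i : ℕ) (y : zSpace M a (i + 1))
    (E : zIdx ι i) :
    ((zd M a i y E : M.carrier)) = ∑ ℓ, zdTerm M a i y E ℓ := by
  rw [zd_apply_val, Finset.sum_attach (E.1ᶜ) (zdTerm M a i y E)]
  apply Finset.sum_subset (Finset.subset_univ _)
  intro x _ hx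
  rw [zdTerm, dif_neg hx]

lemma zval_congr (M : GradedMod k ι) (a : ι → ℤ) {i : ℕ} (y : zSpace M a i)
    {e1 e2 : zIdx ι i} (h : e1 = e2) : (y e1 : M.carrier) = (y e2 : M.carrier) := by
  subst h; rfl

lemma hmt_dA (M : GradedMod k ι) (hsf : M.IsSquarefree) (a : ι → ℤ) {j : ι} (h2 : 2 ≤ a j)
    (i : ℕ) (y : zSpace M a i) (E : zIdx ι i) (hE : j ∉ E.1) :
    zd M a i (hmt M hsf a h2 i y) E = y E := by
  apply Subtype.ext
  rw [zd_apply_val']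
  have hzero : ∀ b ∈ Finset.univ (α := ι), b ≠ j →
      zdTerm M a i (hmt M hsf a h2 i y) E b = 0 := by
    intro b _ hb
    rw [zdTerm]
    split
    · rename_i hbc
      rw [hmt_val_neg M hsf a h2 i y
        ⟨insert b E.1, by rw [Finset.card_insert_of_notMem (Finset.mem_compl.1 hbc), E.2]⟩
        (by
          intro hc
          rcases Finset.mem_insert.1 hc with h' | h'
          · exact hb h'.symm
          · exact hE h')]
      simp
    · rfl
  rw [Finset.sum_eq_single j hzero (fun hc => absurd (Finset.mem_univ j) hc)]
  rw [zdTerm, dif_pos (Finset.mem_compl.2 hE)]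
  have hins : j ∈ insert j E.1 := Finset.mem_insert_self j E.1
  rw [hmt_val_pos M hsf a h2 i y
    ⟨insert j E.1, by rw [Finset.card_insert_of_notMem hE, E.2]⟩ hins]
  rw [smul_comm (X j : MvPolynomial ι k)
    (CombSqMod.ksign ((insert j E.1).erase j) j)]
  rw [jinv_val M hsf a h2 hins]
  rw [zval_congr M a y (e2 := E) (Subtype.ext (Finset.erase_insert hE))]
  have hsgn : CombSqMod.ksign ((insert j E.1).erase j) j = CombSqMod.ksign E.1 j := by
    rw [Finset.erase_insert hE]
  rw [hsgn, smul_smul, ksign_sq, one_smul]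

lemma smul_rearrange (M : GradedMod k ι) (c d : ℤ) (p q : MvPolynomial ι k) (v : M.carrier) :
    p • (c • (q • (d • v))) = (c * d) • (q • (p • v)) := by
  rw [smul_comm p c, smul_comm p q, smul_comm p d, smul_comm q d, smul_smul c d]

lemma hmt_dB (M : GradedMod k ι) (hsf : M.IsSquarefree) (a : ι → ℤ) {j : ι} (h2 : 2 ≤ a j)
    (i : ℕ) (y : zSpace M a (i + 1)) (E : zIdx ι (i + 1)) (hE : j ∈ E.1) :
    zd M a (i + 1) (hmt M hsf a h2 (i + 1) y) E + hmt M hsf a h2 i (zd M a i y) E = y E := by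
  have hEj : (E.1.erase j).card = i := by rw [Finset.card_erase_of_mem hE, E.2]; rfl
  apply (jmult_bij M hsf a h2 hE).1
  apply Subtype.ext
  rw [jmult_val, jmult_val, Submodule.coe_add, smul_add]
  rw [hmt_val_pos M hsf a h2 i (zd M a i y) E hE]
  rw [smul_comm (X j : MvPolynomial ι k) (CombSqMod.ksign (E.1.erase j) j)]
  rw [jinv_val M hsf a h2 hE]
  rw [zd_apply_val' M a i y ⟨E.1.erase j, hEj⟩]
  rw [Finset.smul_sum]
  rw [zd_apply_val' M a (i + 1) (hmt M hsf a h2 (i + 1) y) E]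
  rw [Finset.smul_sum]
  rw [← Finset.sum_add_distrib]
  have key : ∀ ℓ ∈ Finset.univ (α := ι),
      ((X j : MvPolynomial ι k) • zdTerm M a (i + 1) (hmt M hsf a h2 (i + 1) y) E ℓ +
        CombSqMod.ksign (E.1.erase j) j • zdTerm M a i y ⟨E.1.erase j, hEj⟩ ℓ)
      = if ℓ = j then (X j : MvPolynomial ι k) • ((y E : M.carrier)) else 0 := by
    intro ℓ _
    by_cases hlj : ℓ = j
    · subst hlj
      rw [if_pos rfl]
      rw [zdTerm, zdTerm]
      rw [dif_neg (by simp [hE] : ℓ ∉ E.1ᶜ)]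
      rw [dif_pos (by simp : ℓ ∈ ((⟨E.1.erase ℓ, hEj⟩ : zIdx ι i)).1ᶜ)]
      rw [smul_zero, zero_add]
      rw [zval_congr M a y (e2 := E) (Subtype.ext (Finset.insert_erase hE))]
      rw [smul_smul]
      have hAB : CombSqMod.ksign ((E.1).erase ℓ) ℓ *
          CombSqMod.ksign ((⟨(E.1).erase ℓ, hEj⟩ : zIdx ι i)).1 ℓ = 1 := ksign_sq _ _
      rw [hAB, one_smul]
    · rw [if_neg hlj]
      by_cases hlE : ℓ ∈ E.1
      · rw [zdTerm, zdTerm]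
        rw [dif_neg (by simp [hlE] : ℓ ∉ E.1ᶜ)]
        rw [dif_neg (by simp [Finset.mem_erase, hlj, hlE] :
          ℓ ∉ ((⟨E.1.erase j, hEj⟩ : zIdx ι i)).1ᶜ)]
        rw [smul_zero, smul_zero, add_zero]
      · have hjE' : j ∈ insert ℓ E.1 := Finset.mem_insert_of_mem hE
        rw [zdTerm, zdTerm]
        rw [dif_pos (Finset.mem_compl.2 hlE)]
        rw [dif_pos (by simp [Finset.mem_erase, hlE] :
          ℓ ∈ ((⟨E.1.erase j, hEj⟩ : zIdx ι i)).1ᶜ)]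
        rw [hmt_val_pos M hsf a h2 (i + 1) y
          ⟨insert ℓ E.1, by rw [Finset.card_insert_of_notMem hlE, E.2]⟩ hjE']
        rw [smul_rearrange]
        rw [jinv_val M hsf a h2 hjE']
        rw [zval_congr M a y
          (e2 := ⟨insert ℓ (E.1.erase j), by
            rw [Finset.card_insert_of_notMem (by simp [Finset.mem_erase, hlE]), hEj]⟩)
          (Subtype.ext (Finset.erase_insert_of_ne hlj))]
        rw [smul_smul (CombSqMod.ksign (E.1.erase j) j)]
        have hc : CombSqMod.ksign E.1 ℓ * CombSqMod.ksign ((insert ℓ E.1).erase j) j =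
            -(CombSqMod.ksign (E.1.erase j) j * CombSqMod.ksign (E.1.erase j) ℓ) := by
          have h1 : CombSqMod.ksign E.1 ℓ = CombSqMod.ksign (insert j (E.1.erase j)) ℓ := by
            rw [Finset.insert_erase hE]
          rw [Finset.erase_insert_of_ne hlj, h1]
          exact ksign_cross (Finset.notMem_erase j E.1)
            (by simp [Finset.mem_erase, hlj, hlE]) hlj
        rw [hc, neg_smul]
        exact neg_add_cancel _
  rw [Finset.sum_congr rfl key, Finset.sum_ite_eq' Finset.univ j, if_pos (Finset.mem_univ j)]

lemma bettiZ_eq_zero_of_two_le (M : GradedMod k ι) (hsf : M.IsSquarefree) (i : ℕ)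
    (a : ι → ℤ) (j : ι) (h2 : 2 ≤ a j) : M.bettiZ i a = 0 := by
  unfold bettiZ
  have htop : Submodule.comap (zcycles M a i).subtype (LinearMap.range (zd M a i)) = ⊤ := by
    rw [Submodule.eq_top_iff']
    intro x
    rw [Submodule.mem_comap]
    show (x : zSpace M a i) ∈ LinearMap.range (zd M a i)
    rw [LinearMap.mem_range]
    cases i with
    | zero =>
      refine ⟨hmt M hsf a h2 0 x.1, ?_⟩
      funext E
      apply hmt_dA M hsf a h2 0 x.1 E
      have hE : E.1 = ∅ := Finset.card_eq_zero.1 E.2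
      rw [hE]
      exact Finset.notMem_empty j
    | succ m =>
      have hx : zd M a m x.1 = 0 := LinearMap.mem_ker.1 x.2
      refine ⟨hmt M hsf a h2 (m + 1) x.1, ?_⟩
      funext E
      by_cases hjE : j ∈ E.1
      · have hB := hmt_dB M hsf a h2 m x.1 E hjE
        rw [hx, hmt_zero] at hB
        simpa using hB
      · exact hmt_dA M hsf a h2 (m + 1) x.1 E hjE
  rw [htop]
  haveI : Subsingleton (↥(zcycles M a i) ⧸ (⊤ : Submodule k ↥(zcycles M a i))) :=
    Submodule.Quotient.subsingleton_iff.2 rfl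
  exact Module.finrank_zero_of_subsingleton

end GradedMod

/-! **Statement 6**.
For a squarefree `S`-module `M`, `S = k[x₁,…,xₙ]`, if the graded Betti number
`β_{i,a}^S(M) = dim_k [Tor_i^S(k, M)]_a` (computed as degree-`a` Koszul homology)
is nonzero for some `a ∈ ℤⁿ`, then `a` is a squarefree vector: every coordinate is 0 or 1. -/
theorem betti_degrees_squarefree
    {k : Type} [Field k] {n : ℕ} (M : GradedMod k (Fin n)) (hsf : M.IsSquarefree)
    (i : ℕ) (a : Fin n → ℤ) (h : M.bettiZ i a ≠ 0) :
    ∀ j, a j = 0 ∨ a j = 1 := by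
  intro j
  by_contra hc
  push_neg at hc
  obtain ⟨h0, h1⟩ := hc
  rcases lt_or_ge (a j) 0 with hneg | hpos
  · exact h (GradedMod.bettiZ_eq_zero_of_neg M i a j hneg)
  · have h2 : 2 ≤ a j := by omega
    exact h (GradedMod.bettiZ_eq_zero_of_two_le M hsf i a j h2)
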